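/- Let q and c be real numbers with 0 < q < 1 and c ≥ 0, and set λ := q − q^{−1}. Let R be a unital associative ℂ-algebra containing elements a, a′, b, b′, X, X′, K, K′ such that: aa′ = a′a = 1; KK′ = K′K = 1; each of X and X′ commutes with each of a, a′, b, b′; Ka = aK; bK = qKb; Kb′ = qb′K; XK = qKX; KX′ = qX′K; ab = q^{−2} ba; ab′ = q² b′a; b′b = a − a² + c; bb′ = q²a − q⁴a² + c; and X′X − q²XX′ = (1 − q²)(q² K′⁴ a² + c). Define F := q^{−3/2} λ^{−1} (X − qb) K a′ and E := q^{−3/2} λ^{−1} a′ K (X′ − q b′). Then KE = qEK, FK = qKF, and EF − FE = λ^{−1}(K² − K′²). -/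

import Mathlib

set_option maxHeartbeats 1600000 in
private lemma uq_conj {R : Type*} [Ring R] (u v z : R)
    (huv : u * v = 1) (hvu : v * u = 1) (h : z * u = u * z) : z * v = v * z := by
  calc z * v = v * (u * z * v) := by rw [← mul_assoc, ← mul_assoc, hvu, one_mul]
    _ = v * (z * (u * v)) := by rw [← h, mul_assoc]
    _ = v * z := by rw [huv, mul_one]

private lemma uq_conj_smul {R : Type*} [Ring R] [Algebra ℂ R] (u v z : R) (t : ℂ)
    (huv : u * v = 1) (hvu : v * u = 1) (h : u * z = t • (z * u)) : z * v = t • (v * z) := by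
  calc z * v = v * (u * z * v) := by rw [← mul_assoc, ← mul_assoc, hvu, one_mul]
    _ = v * (t • (z * (u * v))) := by rw [h, smul_mul_assoc, mul_assoc]
    _ = t • (v * z) := by rw [huv, mul_one, mul_smul_comm]

private lemma uq_inv_rel {R : Type*} [Ring R] [Algebra ℂ R] (u v : R) (t : ℂ) (ht : t ≠ 0)
    (h : u * v = t • (v * u)) : v * u = t⁻¹ • (u * v) := by
  rw [h, inv_smul_smul₀ ht]

private lemma uq_swap {R : Type*} [Ring R] (u v : R) (h : u * v = v * u) (r : R) :
    u * (v * r) = v * (u * r) := by rw [← mul_assoc, h, mul_assoc]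

private lemma uq_swap_smul {R : Type*} [Ring R] [Algebra ℂ R] (u v : R) (t : ℂ)
    (h : u * v = t • (v * u)) (r : R) : u * (v * r) = t • (v * (u * r)) := by
  rw [← mul_assoc, h, smul_mul_assoc, mul_assoc]

set_option maxHeartbeats 3000000 in
theorem decoupled_presentation_uq_relations
    (q c : ℝ) (hq0 : 0 < q) (hq1 : q < 1) (hc : 0 ≤ c)
    {R : Type*} [Ring R] [Algebra ℂ R]
    (a a' b b' X X' K K' : R)
    (h1 : a * a' = 1) (h2 : a' * a = 1)
    (h3 : K * K' = 1) (h4 : K' * K = 1)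
    (hcomm : ∀ u ∈ ({X, X'} : Set R), ∀ w ∈ ({a, a', b, b'} : Set R), u * w = w * u)
    (h5 : K * a = a * K)
    (h6 : b * K = (q : ℂ) • (K * b))
    (h7 : K * b' = (q : ℂ) • (b' * K))
    (h8 : X * K = (q : ℂ) • (K * X))
    (h9 : K * X' = (q : ℂ) • (X' * K))
    (h10 : a * b = (((q : ℂ) ^ 2)⁻¹) • (b * a))
    (h11 : a * b' = ((q : ℂ) ^ 2) • (b' * a))
    (h12 : b' * b = a - a ^ 2 + (c : ℂ) • (1 : R))
    (h13 : b * b' = ((q : ℂ) ^ 2) • a - ((q : ℂ) ^ 4) • a ^ 2 + (c : ℂ) • (1 : R))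
    (h14 : X' * X - ((q : ℂ) ^ 2) • (X * X')
      = ((1 - q ^ 2 : ℝ) : ℂ) • (((q : ℂ) ^ 2) • (K' ^ 4 * a ^ 2) + (c : ℂ) • (1 : R)))
    (E F : R)
    (hF : F = ((q ^ (-(3 : ℝ) / 2) * (q - q⁻¹)⁻¹ : ℝ) : ℂ) • ((X - (q : ℂ) • b) * K * a'))
    (hE : E = ((q ^ (-(3 : ℝ) / 2) * (q - q⁻¹)⁻¹ : ℝ) : ℂ) • (a' * K * (X' - (q : ℂ) • b'))) :
    K * E = (q : ℂ) • (E * K) ∧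
    F * K = (q : ℂ) • (K * F) ∧
    E * F - F * E = (((q - q⁻¹)⁻¹ : ℝ) : ℂ) • (K ^ 2 - K' ^ 2) := by
  have hqC : (q : ℂ) ≠ 0 := by exact_mod_cast hq0.ne'
  have hq2R : q ^ 2 ≠ 1 := by nlinarith
  have hq2m : ((q : ℂ) ^ 2 - 1) ≠ 0 := by
    rw [sub_ne_zero]
    exact_mod_cast hq2R
  -- commutation of X, X' with a, a', b, b'
  have hXa : X * a = a * X := hcomm X (by simp) a (by simp)
  have hXa' : X * a' = a' * X := hcomm X (by simp) a' (by simp)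
  have hXb : X * b = b * X := hcomm X (by simp) b (by simp)
  have hXb' : X * b' = b' * X := hcomm X (by simp) b' (by simp)
  have hX'a : X' * a = a * X' := hcomm X' (by simp) a (by simp)
  have hX'a' : X' * a' = a' * X' := hcomm X' (by simp) a' (by simp)
  have hX'b : X' * b = b * X' := hcomm X' (by simp) b (by simp)
  have hX'b' : X' * b' = b' * X' := hcomm X' (by simp) b' (by simp)
  -- derived commutation facts
  have hKa' : K * a' = a' * K := uq_conj a a' K h1 h2 h5
  have hK'a : K' * a = a * K' := (uq_conj K K' a h3 h4 h5.symm).symm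
  have hba' : b * a' = (((q : ℂ) ^ 2)⁻¹) • (a' * b) := uq_conj_smul a a' b _ h1 h2 h10
  have hb'a' : b' * a' = ((q : ℂ) ^ 2) • (a' * b') := uq_conj_smul a a' b' _ h1 h2 h11
  have hKb : K * b = (q : ℂ)⁻¹ • (b * K) := uq_inv_rel b K _ hqC h6
  have hKX : K * X = (q : ℂ)⁻¹ • (X * K) := uq_inv_rel X K _ hqC h8
  -- swap (associativity-compatible) versions
  have wKa' := uq_swap K a' hKa'
  have wK'a := uq_swap K' a hK'a
  have wXa' := uq_swap X a' hXa'
  have wX'a' := uq_swap X' a' hX'a'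
  have wba' := uq_swap_smul b a' _ hba'
  have wb'a' := uq_swap_smul b' a' _ hb'a'
  have wKX' := uq_swap_smul K X' _ h9
  have wKb' := uq_swap_smul K b' _ h7
  have wKX := uq_swap_smul K X _ hKX
  have wKb := uq_swap_smul K b _ hKb
  have wXb := uq_swap X b hXb
  have wXb' := uq_swap X b' hXb'
  have wX'b := uq_swap X' b hX'b
  have wX'b' := uq_swap X' b' hX'b'
  have waa' : ∀ r : R, a' * (a * r) = r := fun r => by rw [← mul_assoc, h2, one_mul]
  have wK'K : ∀ r : R, K' * (K * r) = r := fun r => by rw [← mul_assoc, h4, one_mul]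
  have hq2mR : q ^ 2 - 1 ≠ 0 := sub_ne_zero.mpr hq2R
  obtain ⟨s, hsdef⟩ : ∃ s : ℂ, s = ((q ^ (-(3 : ℝ) / 2) * (q - q⁻¹)⁻¹ : ℝ) : ℂ) := ⟨_, rfl⟩
  rw [← hsdef] at hE hF
  refine ⟨?_, ?_, ?_⟩
  · -- K E = q E K
    rw [hE]
    simp only [mul_sub, sub_mul, smul_sub, mul_smul_comm, smul_mul_assoc, smul_smul,
      mul_assoc, hKa', hXa', hX'a', hba', hb'a', h9, h7, hKX, hKb, hK'a, hXb, hXb', hX'b, hX'b',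
      wKa', wXa', wX'a', wba', wb'a', wKX', wKb', wKX, wKb, wK'a, wXb, wXb', wX'b, wX'b', waa', wK'K, h2, h4,
      mul_one, one_mul]
    match_scalars <;> field_simp [hqC] <;> ring
  · -- F K = q K F
    rw [hF]
    simp only [mul_sub, sub_mul, smul_sub, mul_smul_comm, smul_mul_assoc, smul_smul,
      mul_assoc, hKa', hXa', hX'a', hba', hb'a', h9, h7, hKX, hKb, hK'a, hXb, hXb', hX'b, hX'b',
      wKa', wXa', wX'a', wba', wb'a', wKX', wKb', wKX, wKb, wK'a, wXb, wXb', wX'b, wX'b', waa', wK'K, h2, h4,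
      mul_one, one_mul]
    match_scalars <;> field_simp [hqC] <;> ring
  · -- E F - F E
    have hlam : q - q⁻¹ ≠ 0 := by
      have h' : 1 < q⁻¹ := (one_lt_inv₀ hq0).mpr hq1
      nlinarith
    have h14' : X' * X = ((1 - q ^ 2 : ℝ) : ℂ) • (((q : ℂ) ^ 2) • (K' ^ 4 * a ^ 2) + (c : ℂ) • (1 : R))
        + ((q : ℂ) ^ 2) • (X * X') := by
      rw [← h14]; abel
    have r14 : a' * (a' * (X' * (X * (K * K))))
        = (((1 - q ^ 2 : ℝ) : ℂ) * (q : ℂ) ^ 2) • (K' * K')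
          + (((1 - q ^ 2 : ℝ) : ℂ) * c) • (a' * (a' * (K * K)))
          + ((q : ℂ) ^ 2) • (a' * (a' * (X * (X' * (K * K))))) := by
      have e1 : X' * (X * (K * K)) = (X' * X) * (K * K) := by rw [mul_assoc]
      rw [e1, h14']
      simp only [add_mul, smul_mul_assoc, one_mul, mul_add, mul_smul_comm, smul_add,
        smul_smul, pow_succ, pow_zero, one_mul, mul_assoc,
        wK'a, hK'a, waa', wK'K, h2, h4, mul_one]
    have r12 : a' * (a' * (b' * (b * (K * K))))
        = a' * (K * K) - K * K + (c : ℂ) • (a' * (a' * (K * K))) := by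
      have e1 : b' * (b * (K * K)) = (b' * b) * (K * K) := by rw [mul_assoc]
      rw [e1, h12]
      simp only [add_mul, sub_mul, smul_mul_assoc, one_mul, mul_add, mul_sub, mul_smul_comm,
        smul_sub, smul_add, smul_smul, pow_succ, pow_zero, one_mul, mul_assoc,
        waa', h2, mul_one]
    have r13 : a' * (a' * (b * (b' * (K * K))))
        = ((q : ℂ) ^ 2) • (a' * (K * K)) - ((q : ℂ) ^ 4) • (K * K)
          + (c : ℂ) • (a' * (a' * (K * K))) := by
      have e1 : b * (b' * (K * K)) = (b * b') * (K * K) := by rw [mul_assoc]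
      rw [e1, h13]
      simp only [add_mul, sub_mul, smul_mul_assoc, one_mul, mul_add, mul_sub, mul_smul_comm,
        smul_sub, smul_add, smul_smul, pow_succ, pow_zero, one_mul, mul_assoc,
        waa', h2, mul_one]
    have hPQ : (a' * K * (X' - (q : ℂ) • b')) * ((X - (q : ℂ) • b) * K * a')
        - ((X - (q : ℂ) • b) * K * a') * (a' * K * (X' - (q : ℂ) • b'))
        = ((1 - (q : ℂ) ^ 2) * (q : ℂ) ^ 2) • (K' * K' - K * K) := by
      simp only [mul_sub, sub_mul, smul_sub, mul_smul_comm, smul_mul_assoc, smul_smul,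
        mul_assoc, hKa', hXa', hX'a', hba', hb'a', h9, h7, hKX, hKb, hK'a, hXb, hXb', hX'b, hX'b',
        wKa', wXa', wX'a', wba', wb'a', wKX', wKb', wKX, wKb, wK'a, wXb, wXb', wX'b, wX'b', waa', wK'K, h2, h4,
        mul_one, one_mul]
      rw [r14, r12, r13]
      match_scalars <;> push_cast <;> field_simp [hqC, hq2m] <;> ring
    have hEF : E * F - F * E = (s * s) • ((a' * K * (X' - (q : ℂ) • b')) * ((X - (q : ℂ) • b) * K * a')
        - ((X - (q : ℂ) • b) * K * a') * (a' * K * (X' - (q : ℂ) • b'))) := by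
      rw [hE, hF]
      simp only [smul_mul_assoc, mul_smul_comm, smul_smul, smul_sub]
    rw [hEF, hPQ, smul_smul]
    have hrp : q ^ (-(3 : ℝ) / 2) * q ^ (-(3 : ℝ) / 2) = (q ^ 3)⁻¹ := by
      rw [← Real.rpow_add hq0]
      norm_num
    have hLinv : (q - q⁻¹)⁻¹ = q / (q ^ 2 - 1) := by
      rw [show q - q⁻¹ = (q ^ 2 - 1) / q by field_simp [hq0.ne']]
      exact inv_div _ _
    have hreal : (q ^ (-(3 : ℝ) / 2) * (q - q⁻¹)⁻¹) * (q ^ (-(3 : ℝ) / 2) * (q - q⁻¹)⁻¹)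
        * ((1 - q ^ 2) * q ^ 2) = -(q - q⁻¹)⁻¹ := by
      rw [hLinv, show (q ^ (-(3 : ℝ) / 2) * (q / (q ^ 2 - 1))) * (q ^ (-(3 : ℝ) / 2) * (q / (q ^ 2 - 1)))
          * ((1 - q ^ 2) * q ^ 2)
          = (q ^ (-(3 : ℝ) / 2) * q ^ (-(3 : ℝ) / 2)) * ((q / (q ^ 2 - 1)) * (q / (q ^ 2 - 1)) * ((1 - q ^ 2) * q ^ 2)) by ring,
        hrp]
      field_simp [hq2mR]
      ring
    have hsc : s * s * ((1 - (q : ℂ) ^ 2) * (q : ℂ) ^ 2) = -(((q - q⁻¹)⁻¹ : ℝ) : ℂ) := by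
      rw [hsdef]
      exact_mod_cast congrArg Complex.ofReal hreal
    rw [hsc, pow_two, pow_two]
    module
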